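/- Let P be a finite poset with SCD C_1,...,C_s, let G ≤ S_n act on P^n by permuting coordinates, and let J ⊆ [s]^n be a system of representatives of the G-orbits on [s]^n. Then the map Ψ sending a G-orbit [ȳ]_G in P^n/G to the G_{j̄}-orbit [x̄]_{G_{j̄}}, where x̄ ∈ [ȳ]_G lies in C(j̄) for the unique j̄ ∈ J, is a well-defined bijection from P^n/G onto the disjoint union over j̄ ∈ J of C(j̄)/G_{j̄}. -/

import Mathlib

namespace PaperSCD

variable {β : Type*}

/-- `x` is covered by `y` with respect to the order relation `le`. -/
def Covers (le : β → β → Prop) (x y : β) : Prop :=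
  le x y ∧ x ≠ y ∧ ∀ z, le x z → le z y → z = x ∨ z = y

/-- `r` is a rank function for the order `le`: covers raise rank by one and
minimal elements have rank zero. -/
def IsRankFn (le : β → β → Prop) (r : β → ℕ) : Prop :=
  (∀ x y, Covers le x y → r y = r x + 1) ∧ ∀ x, (∀ y, le y x → y = x) → r x = 0

/-- `C` is a chain with respect to `le`. -/
def IsChn (le : β → β → Prop) (C : Set β) : Prop :=
  ∀ x ∈ C, ∀ y ∈ C, le x y ∨ le y x

/-- `x` is covered by `y` inside the subposet `S`. -/
def CoversIn (le : β → β → Prop) (S : Set β) (x y : β) : Prop :=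
  x ∈ S ∧ y ∈ S ∧ le x y ∧ x ≠ y ∧ ∀ z ∈ S, le x z → le z y → z = x ∨ z = y

/-- The chain `C` is saturated in the ambient order: consecutive elements of `C`
are covers in the ambient order. -/
def SatChn (le : β → β → Prop) (C : Set β) : Prop :=
  ∀ x ∈ C, ∀ y ∈ C, CoversIn le C x y → Covers le x y

/-- `C` is a nonempty saturated chain which is symmetric for rank function `r`
in a poset of rank `R`. -/
def IsSymmSatChain (le : β → β → Prop) (r : β → ℕ) (R : ℕ) (C : Set β) : Prop :=
  C.Nonempty ∧ IsChn le C ∧ SatChn le C ∧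
    ∃ a ∈ C, ∃ b ∈ C, (∀ x ∈ C, le a x ∧ le x b) ∧ r a + r b = R

/-- `𝒟` is a symmetric chain decomposition. -/
def IsSCD (le : β → β → Prop) (r : β → ℕ) (R : ℕ) (𝒟 : Set (Set β)) : Prop :=
  (∀ C ∈ 𝒟, IsSymmSatChain le r R C) ∧ ∀ x : β, ∃! C, C ∈ 𝒟 ∧ x ∈ C

/-- The order `le` is a symmetric chain order. -/
def IsSCO (le : β → β → Prop) : Prop :=
  ∃ (r : β → ℕ) (R : ℕ) (𝒟 : Set (Set β)),
    IsRankFn le r ∧ (∀ x, r x ≤ R) ∧ (Nonempty β → ∃ x, r x = R) ∧ IsSCD le r R 𝒟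

/-- The quotient order on `Quot rel`: `[x] ≤ [y]` iff some representatives are comparable. -/
def qle (rel : β → β → Prop) (le : β → β → Prop) (a b : Quot rel) : Prop :=
  ∃ x y : β, Quot.mk rel x = a ∧ Quot.mk rel y = b ∧ le x y

/-- The permutation `(i, r) ↦ (ρ_r i, τ r)` of `[k] × [t]`. -/
def wrPerm {k t : ℕ} (ρ : Fin t → Equiv.Perm (Fin k)) (τ : Equiv.Perm (Fin t)) :
    Equiv.Perm (Fin k × Fin t) where
  toFun p := (ρ p.2 p.1, τ p.2)
  invFun p := ((ρ (τ.symm p.2)).symm p.1, τ.symm p.2)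
  left_inv := by rintro ⟨i, r⟩; simp
  right_inv := by rintro ⟨i, r⟩; simp

/-- The wreath product `K ≀ T` as a set of permutations of `[k] × [t]`. -/
def wreathSet {k t : ℕ} (K : Subgroup (Equiv.Perm (Fin k))) (T : Subgroup (Equiv.Perm (Fin t))) :
    Set (Equiv.Perm (Fin k × Fin t)) :=
  { φ | ∃ ρ τ, (∀ r, ρ r ∈ K) ∧ τ ∈ T ∧ φ = wrPerm ρ τ }

/-- A subgroup of a permutation group is generated by powers of pairwise disjoint cycles. -/
def GenByPowersOfDisjointCycles {α : Type*} (T : Subgroup (Equiv.Perm α)) : Prop :=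
  ∃ (m : ℕ) (σ : Fin m → Equiv.Perm α) (e : Fin m → ℕ),
    (∀ i, (σ i).IsCycle) ∧ (∀ i j, i ≠ j → (σ i).Disjoint (σ j)) ∧
    T = Subgroup.closure (Set.range fun i => σ i ^ e i)

/-- The `r`-th column of a subset of `[k] × [t]`, identified with a subset of `[k]`. -/
def col {k t : ℕ} (X : Finset (Fin k × Fin t)) (r : Fin t) : Finset (Fin k) :=
  (X.filter fun p => p.2 = r).image Prod.fst

/-- Orbit relation of `K ≤ S_k` on subsets of `[k]`. -/
def relK {k : ℕ} (K : Subgroup (Equiv.Perm (Fin k))) :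
    Finset (Fin k) → Finset (Fin k) → Prop :=
  fun A B => ∃ g ∈ K, A.image ⇑g = B

/-- Orbit relation of the wreath product `K ≀ T` on subsets of `[k] × [t]`. -/
def relW {k t : ℕ} (K : Subgroup (Equiv.Perm (Fin k))) (T : Subgroup (Equiv.Perm (Fin t))) :
    Finset (Fin k × Fin t) → Finset (Fin k × Fin t) → Prop :=
  fun X Y => ∃ φ ∈ wreathSet K T, X.image ⇑φ = Y

/-- The rank (cardinality of a representative) on `B_k/K`. -/
def qrank {k : ℕ} (K : Subgroup (Equiv.Perm (Fin k))) : Quot (relK K) → ℕ :=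
  Quot.lift Finset.card (by
    rintro A B ⟨g, -, rfl⟩
    exact (Finset.card_image_of_injective A g.injective).symm)

/-- The coordinate-permuting action `σ • f = f ∘ σ⁻¹`. -/
def actF {n : ℕ} {γ : Type*} (σ : Equiv.Perm (Fin n)) (f : Fin n → γ) : Fin n → γ :=
  fun i => f (σ.symm i)

/-- `τ` stabilizes `j̄` under the coordinate-permuting action. -/
def ActStab {t s : ℕ} (τ : Equiv.Perm (Fin t)) (j : Fin t → Fin s) : Prop :=
  ∀ r, j (τ.symm r) = j r

end PaperSCD
open PaperSCD

/-- The grid `C(j̄) = C_{j_1} × ⋯ × C_{j_n}` in `P^n`, as a subtype. -/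
def GridP {α : Type*} {n s : ℕ} (𝒞 : Fin s → Set α) (v : Fin n → Fin s) :=
  {f : Fin n → α // ∀ i, f i ∈ 𝒞 (v i)}

/-- Orbit relation of the stabilizer `G_{j̄}` acting on the grid `C(j̄)` by restriction. -/
def relGridP {α : Type*} {n s : ℕ} (G : Subgroup (Equiv.Perm (Fin n)))
    (𝒞 : Fin s → Set α) (v : Fin n → Fin s) : GridP 𝒞 v → GridP 𝒞 v → Prop :=
  fun f g => ∃ σ ∈ G, (∀ i, v (σ.symm i) = v i) ∧ ∀ i, f.1 (σ.symm i) = g.1 i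

/-- Orbit relation of `G ≤ S_n` acting on `P^n` by permuting coordinates. -/
def relPow {α : Type*} {n : ℕ} (G : Subgroup (Equiv.Perm (Fin n))) :
    (Fin n → α) → (Fin n → α) → Prop :=
  fun f g => ∃ σ ∈ G, actF σ f = g


section AuxProof
variable {α : Type*} {n s : ℕ}

theorem relPow_equivalence (G : Subgroup (Equiv.Perm (Fin n))) :
    Equivalence (relPow (α := α) G) := by
  constructor
  · intro f; exact ⟨1, G.one_mem, funext fun i => by simp [actF, Equiv.Perm.one_symm]⟩
  · rintro f g ⟨σ, hσ, rfl⟩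
    exact ⟨σ⁻¹, G.inv_mem hσ, funext fun i => by simp [actF, Equiv.Perm.inv_def]⟩
  · rintro f g h ⟨σ, hσ, rfl⟩ ⟨τ, hτ, rfl⟩
    exact ⟨τ * σ, G.mul_mem hτ hσ, funext fun i => by simp [actF, Equiv.Perm.mul_def]⟩

theorem relPow_of_mk_eq (G : Subgroup (Equiv.Perm (Fin n))) {f g : Fin n → α}
    (h : Quot.mk (relPow (α := α) G) f = Quot.mk (relPow (α := α) G) g) :
    relPow (α := α) G f g :=
  ((relPow_equivalence G).eqvGen_iff).mp (Quot.eq.mp h)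

end AuxProof

/-- With an SCD `C_1, …, C_s` of `P`, `G ≤ S_n` permuting coordinates of
`P^n`, and a system `J` of representatives of the `G`-orbits on `[s]^n`, the map `Ψ`
sending `[ȳ]_G` to `[x̄]_{G_{j̄}}` where `x̄ ∈ [ȳ]_G` lies in `C(j̄)` for the unique `j̄ ∈ J`
is a well-defined bijection from `P^n/G` onto the disjoint union of the `C(j̄)/G_{j̄}`. -/
theorem stmt_12 {α : Type*} [Fintype α] [PartialOrder α]
    (r : α → ℕ) (R : ℕ) (hr : IsRankFn (· ≤ · : α → α → Prop) r)
    {s : ℕ} (𝒞 : Fin s → Set α)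
    (hchain : ∀ j, IsSymmSatChain (· ≤ ·) r R (𝒞 j))
    (hpart : ∀ x : α, ∃! j : Fin s, x ∈ 𝒞 j)
    {n : ℕ} (G : Subgroup (Equiv.Perm (Fin n)))
    (J : Set (Fin n → Fin s))
    (hJ : ∀ v : Fin n → Fin s, ∃! w, w ∈ J ∧ ∃ σ ∈ G, actF σ v = w) :
    ∃ Ψ : Quot (relPow (α := α) G) →
        Σ w : {w : Fin n → Fin s // w ∈ J}, Quot (relGridP G 𝒞 w.1),
      Function.Bijective Ψ ∧
      ∀ (f : Fin n → α) (w : Fin n → Fin s) (hw : w ∈ J) (hf : ∀ i, f i ∈ 𝒞 (w i)),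
        Ψ (Quot.mk (relPow G) f) = ⟨⟨w, hw⟩, Quot.mk (relGridP G 𝒞 w) ⟨f, hf⟩⟩ := by
  classical
  have tyeq : ∀ (x : α) (j j' : Fin s), x ∈ 𝒞 j → x ∈ 𝒞 j' → j = j' := by
    intro x j j' h h'
    exact (hpart x).unique h h'
  -- the inverse map Φ : inclusion of each grid orbit into P^n/G
  let Φ : (Σ w : {w : Fin n → Fin s // w ∈ J}, Quot (relGridP G 𝒞 w.1)) →
      Quot (relPow (α := α) G) :=
    fun p => Quot.lift (fun f : GridP 𝒞 p.1.1 => Quot.mk (relPow (α := α) G) f.1)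
      (by
        rintro f g ⟨σ, hσ, hv, hfg⟩
        exact Quot.sound ⟨σ, hσ, funext hfg⟩) p.2
  have hinj : Function.Injective Φ := by
    rintro ⟨⟨w₁, hw₁⟩, q₁⟩ ⟨⟨w₂, hw₂⟩, q₂⟩ h
    induction q₁ using Quot.ind with | _ f =>
    induction q₂ using Quot.ind with | _ g =>
    obtain ⟨σ, hσ, hfg⟩ := relPow_of_mk_eq G h
    have hvw : ∀ i, w₁ (σ.symm i) = w₂ i := by
      intro i
      have h1 : g.1 i ∈ 𝒞 (w₁ (σ.symm i)) := by
        have := congrFun hfg i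
        simp only [actF] at this
        rw [← this]; exact f.2 (σ.symm i)
      exact tyeq _ _ _ h1 (g.2 i)
    have hww : w₂ = w₁ := by
      have h2 : w₂ ∈ J ∧ ∃ τ ∈ G, actF τ w₁ = w₂ :=
        ⟨hw₂, σ, hσ, funext hvw⟩
      have h1 : w₁ ∈ J ∧ ∃ τ ∈ G, actF τ w₁ = w₁ :=
        ⟨hw₁, 1, G.one_mem, funext fun i => by simp [actF, Equiv.Perm.one_symm]⟩
      exact (hJ w₁).unique h2 h1
    subst hww
    have : Quot.mk (relGridP G 𝒞 w₂) f = Quot.mk (relGridP G 𝒞 w₂) g :=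
      Quot.sound ⟨σ, hσ, hvw, fun i => congrFun hfg i⟩
    exact Sigma.ext rfl (heq_of_eq this)
  have hsurj : Function.Surjective Φ := by
    intro q
    induction q using Quot.ind with | _ f =>
    have hv : ∀ i, f i ∈ 𝒞 ((hpart (f i)).choose) := fun i => (hpart (f i)).choose_spec.1
    set v : Fin n → Fin s := fun i => (hpart (f i)).choose with hvdef
    obtain ⟨w, ⟨hwJ, σ, hσ, hσw⟩, -⟩ := hJ v
    have hg : ∀ i, actF σ f i ∈ 𝒞 (w i) := by
      intro i
      have : w i = v (σ.symm i) := (congrFun hσw i).symm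
      rw [this]
      exact hv (σ.symm i)
    refine ⟨⟨⟨w, hwJ⟩, Quot.mk _ ⟨actF σ f, hg⟩⟩, ?_⟩
    exact ((relPow_equivalence G).eqvGen_iff.mpr ⟨σ, hσ, rfl⟩ |> Quot.eq.mpr).symm
  let E := Equiv.ofBijective Φ ⟨hinj, hsurj⟩
  refine ⟨E.symm, E.symm.bijective, ?_⟩
  intro f w hw hf
  rw [Equiv.symm_apply_eq]
  rfl
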